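/- Let n ≥ 2 and let σ denote the (n−1)-dimensional Hausdorff measure on ℝ^n restricted to the unit sphere S^{n−1} = {x ∈ ℝ^n : ‖x‖ = 1}. Then the integral of the nonnegative function (u, v) ↦ ‖u − v‖^{−n} over S^{n−1} × S^{n−1} with respect to the product measure σ × σ is infinite. -/

import Mathlib

open MeasureTheory Metric Set
open scoped ENNReal NNReal Pointwise

namespace SphereHausdorffAux

variable {m : ℕ}

/-- drop the first coordinate -/
def tl (x : EuclideanSpace ℝ (Fin (m+2))) : EuclideanSpace ℝ (Fin (m+1)) :=
  WithLp.toLp 2 fun i => x i.succ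

/-- prepend a coordinate -/
noncomputable def cns (a : ℝ) (w : EuclideanSpace ℝ (Fin (m+1))) :
    EuclideanSpace ℝ (Fin (m+2)) :=
  WithLp.toLp 2 (Fin.cons a w.ofLp : Fin (m+2) → ℝ)

lemma cns_sub (a b : ℝ) (w v : EuclideanSpace ℝ (Fin (m+1))) :
    cns a w - cns b v = cns (a - b) (w - v) := by
  ext i
  refine Fin.cases ?_ (fun j => ?_) i <;>
    simp [cns, PiLp.sub_apply]

lemma tl_cns (a : ℝ) (w : EuclideanSpace ℝ (Fin (m+1))) : tl (cns a w) = w := by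
  ext i; simp [tl, cns]

lemma sq_norm_cns (a : ℝ) (w : EuclideanSpace ℝ (Fin (m+1))) :
    ‖cns a w‖ ^ 2 = a ^ 2 + ‖w‖ ^ 2 := by
  have h1 := EuclideanSpace.norm_eq (cns a w)
  have h2 := EuclideanSpace.norm_eq w
  rw [h1, h2, Real.sq_sqrt (by positivity), Real.sq_sqrt (by positivity),
    Fin.sum_univ_succ]
  simp [cns]

lemma cns_self_tl (x : EuclideanSpace ℝ (Fin (m+2))) : cns (x 0) (tl x) = x :=
  congrArg (WithLp.toLp 2) (Fin.cons_self_tail x.ofLp)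

lemma sq_norm_eq (x : EuclideanSpace ℝ (Fin (m+2))) :
    ‖x‖ ^ 2 = x 0 ^ 2 + ‖tl x‖ ^ 2 := by
  conv_lhs => rw [← cns_self_tl x]
  exact sq_norm_cns _ _

lemma tl_lipschitz : LipschitzWith 1 (tl (m := m)) := by
  refine LipschitzWith.of_dist_le_mul fun x y => ?_
  rw [NNReal.coe_one, one_mul, dist_eq_norm, dist_eq_norm]
  have h : tl x - tl y = tl (x - y) := by ext i; simp [tl, PiLp.sub_apply]
  rw [h]
  have := sq_norm_eq (x - y)
  nlinarith [norm_nonneg (tl (x - y)), norm_nonneg (x - y), sq_nonneg ((x-y) 0)]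

noncomputable def e₀ (m : ℕ) : EuclideanSpace ℝ (Fin (m+2)) := cns 1 0

lemma norm_e₀ : ‖e₀ m‖ = 1 := by
  have h : ‖e₀ m‖ ^ 2 = 1 := by rw [e₀, sq_norm_cns]; simp
  nlinarith [norm_nonneg (e₀ m)]

/-- the graph point over `w` -/
noncomputable def gr (w : EuclideanSpace ℝ (Fin (m+1))) : EuclideanSpace ℝ (Fin (m+2)) :=
  cns (Real.sqrt (1 - ‖w‖ ^ 2)) w

lemma norm_gr {w : EuclideanSpace ℝ (Fin (m+1))} (hw : ‖w‖ ≤ 1) : ‖gr w‖ = 1 := by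
  have h1 : ‖w‖ ^ 2 ≤ 1 := by nlinarith [norm_nonneg w]
  have : ‖gr w‖ ^ 2 = 1 := by
    rw [gr, sq_norm_cns, Real.sq_sqrt (by linarith)]; ring
  nlinarith [norm_nonneg (gr w)]

lemma sq_dist_gr {w : EuclideanSpace ℝ (Fin (m+1))} (hw : ‖w‖ ≤ 1) :
    ‖gr w - e₀ m‖ ^ 2 ≤ 2 * ‖w‖ ^ 2 := by
  have h0 : (0:ℝ) ≤ ‖w‖ := norm_nonneg w
  have h1 : ‖w‖ ^ 2 ≤ 1 := by nlinarith
  have hs : Real.sqrt (1 - ‖w‖ ^ 2) ≥ 1 - ‖w‖ ^ 2 := by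
    nlinarith [Real.sq_sqrt (show (0:ℝ) ≤ 1 - ‖w‖^2 by linarith),
      Real.sqrt_nonneg (1 - ‖w‖^2)]
  have hs1 : Real.sqrt (1 - ‖w‖ ^ 2) ≤ 1 := by
    nlinarith [Real.sq_sqrt (show (0:ℝ) ≤ 1 - ‖w‖^2 by linarith),
      Real.sqrt_nonneg (1 - ‖w‖^2)]
  have : gr w - e₀ m = cns (Real.sqrt (1 - ‖w‖^2) - 1) (w - 0) := by
    rw [gr, e₀, cns_sub]
  rw [this, sq_norm_cns, sub_zero]
  nlinarith

/-- the ball of radius `r/2` is contained in the projection of the `r`-cap around `e₀` -/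
lemma ball_subset_tl_image {r : ℝ} (hr : 0 < r) (hr1 : r ≤ 1) :
    ball (0 : EuclideanSpace ℝ (Fin (m+1))) (r/2) ⊆
      tl '' (sphere (0 : EuclideanSpace ℝ (Fin (m+2))) 1 ∩ ball (e₀ m) r) := by
  intro w hw
  rw [mem_ball, dist_zero_right] at hw
  have hw1 : ‖w‖ ≤ 1 := by linarith
  refine ⟨gr w, ⟨?_, ?_⟩, tl_cns _ _⟩
  · rw [mem_sphere_zero_iff_norm]; exact norm_gr hw1
  · rw [mem_ball, dist_eq_norm]
    have := sq_dist_gr hw1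
    have hlt : ‖gr w - e₀ m‖ ^ 2 < r ^ 2 := by nlinarith [norm_nonneg w]
    have h0 : (0:ℝ) ≤ ‖gr w - e₀ m‖ := norm_nonneg _
    nlinarith

/-- lower bound on the Hausdorff measure of a cap -/
lemma cap_lower {u : EuclideanSpace ℝ (Fin (m+2))} (hu : ‖u‖ = 1) {r : ℝ}
    (hr : 0 < r) (hr1 : r ≤ 1) :
    ENNReal.ofReal (r/2) ^ ((m:ℝ)+1) *
        μH[((m:ℝ)+1)] (ball (0 : EuclideanSpace ℝ (Fin (m+1))) 1) ≤
      μH[((m:ℝ)+1)] (sphere (0 : EuclideanSpace ℝ (Fin (m+2))) 1 ∩ ball u r) := by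
  have hd : (0:ℝ) ≤ (m:ℝ)+1 := by positivity
  -- reduce to u = e₀ via a reflection
  set T := Submodule.reflection (Submodule.span ℝ {e₀ m - u})ᗮ with hT
  have hTe : T (e₀ m) = u := Submodule.reflection_sub (by rw [norm_e₀, hu])
  set Ti : EuclideanSpace ℝ (Fin (m+2)) ≃ᵢ EuclideanSpace ℝ (Fin (m+2)) :=
    T.toIsometryEquiv with hTi
  have himg : Ti '' (sphere 0 1 ∩ ball (e₀ m) r) = sphere 0 1 ∩ ball u r := by
    rw [Set.image_inter Ti.injective, Ti.image_sphere, Ti.image_ball]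
    have h0 : Ti 0 = 0 := by simp [hTi]
    have h1 : Ti (e₀ m) = u := hTe
    rw [h0, h1]
  have hiso : μH[((m:ℝ)+1)] (sphere (0:EuclideanSpace ℝ (Fin (m+2))) 1 ∩ ball u r)
      = μH[((m:ℝ)+1)] (sphere 0 1 ∩ ball (e₀ m) r) := by
    rw [← himg, Ti.hausdorffMeasure_image]
  rw [hiso]
  -- lower bound the cap at e₀ via projection
  have h1 : μH[((m:ℝ)+1)] (ball (0 : EuclideanSpace ℝ (Fin (m+1))) (r/2)) ≤
      μH[((m:ℝ)+1)] (sphere (0:EuclideanSpace ℝ (Fin (m+2))) 1 ∩ ball (e₀ m) r) := by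
    calc μH[((m:ℝ)+1)] (ball (0 : EuclideanSpace ℝ (Fin (m+1))) (r/2))
        ≤ μH[((m:ℝ)+1)] (tl '' (sphere 0 1 ∩ ball (e₀ m) r)) :=
          measure_mono (ball_subset_tl_image hr hr1)
      _ ≤ (1:ℝ≥0∞) ^ ((m:ℝ)+1) * μH[((m:ℝ)+1)] (sphere 0 1 ∩ ball (e₀ m) r) := by
          simpa using tl_lipschitz.hausdorffMeasure_image_le hd _
      _ = _ := by simp
  refine le_trans ?_ h1
  -- scaling
  have hb : ball (0 : EuclideanSpace ℝ (Fin (m+1))) (r/2)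
      = (r/2) • ball (0 : EuclideanSpace ℝ (Fin (m+1))) 1 := by
    rw [_root_.smul_ball (by positivity : r/2 ≠ 0) (0 : EuclideanSpace ℝ (Fin (m+1))) 1]
    rw [smul_zero, Real.norm_of_nonneg (by positivity), mul_one]
  rw [hb, MeasureTheory.Measure.hausdorffMeasure_smul₀ hd (by positivity : r/2 ≠ 0)]
  rw [ENNReal.smul_def, smul_eq_mul]
  gcongr
  rw [ENNReal.coe_rpow_of_nonneg _ hd, ← enorm_eq_nnnorm,
    Real.enorm_eq_ofReal (by positivity : (0:ℝ) ≤ r/2)]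

lemma c0_ne_zero (m : ℕ) :
    (μH[((m:ℝ)+1)] (ball (0 : EuclideanSpace ℝ (Fin (m+1))) 1)) ≠ 0 := by
  set F := EuclideanSpace ℝ (Fin (m+1))
  have hd : (0:ℝ) ≤ (m:ℝ)+1 := by positivity
  have hlip : LipschitzWith 1 (WithLp.equiv 2 (∀ _ : Fin (m+1), ℝ)) :=
    PiLp.lipschitzWith_ofLp 2 _
  have himg := hlip.hausdorffMeasure_image_le hd (ball (0 : F) 1)
  intro h0
  rw [h0] at himg
  simp only [mul_zero, le_zero_iff] at himg
  have hpi : (μH[((m:ℝ)+1)] : Measure (∀ _ : Fin (m+1), ℝ)) = volume := by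
    have := hausdorffMeasure_pi_real (ι := Fin (m+1))
    simpa using this
  rw [hpi] at himg
  have hopen : IsOpen ((WithLp.equiv 2 (∀ _ : Fin (m+1), ℝ)) '' ball (0 : F) 1) := by
    have : (WithLp.equiv 2 (∀ _ : Fin (m+1), ℝ)) '' ball (0 : F) 1
        = (WithLp.equiv 2 (∀ _ : Fin (m+1), ℝ)).symm ⁻¹' ball (0 : F) 1 := by
      rw [Equiv.image_eq_preimage_symm]
    rw [this]
    exact (PiLp.continuous_toLp 2 _).isOpen_preimage _ isOpen_ball
  have hne : ((WithLp.equiv 2 (∀ _ : Fin (m+1), ℝ)) '' ball (0 : F) 1).Nonempty :=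
    ⟨_, ⟨0, mem_ball_self one_pos, rfl⟩⟩
  exact absurd himg (hopen.measure_pos volume hne).ne'

/-- the "good" domain for the graph map -/
def D (m : ℕ) : Set (EuclideanSpace ℝ (Fin (m+1))) :=
  {w | ‖w‖ ^ 2 ≤ 1 - ((m:ℝ)+2)⁻¹}

set_option maxHeartbeats 1000000 in
lemma gr_lipschitzOn : LipschitzOnWith (m+2 : ℝ≥0) (gr (m := m)) (D m) := by
  rw [lipschitzOnWith_iff_dist_le_mul]
  intro w hw v hv
  rw [dist_eq_norm, dist_eq_norm]
  set ε : ℝ := ((m:ℝ)+2)⁻¹ with hε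
  have hε0 : 0 < ε := by positivity
  have hεle : ε ≤ 1 := by
    rw [hε]; apply inv_le_one_of_one_le₀; push_cast; linarith [Nat.cast_nonneg (α := ℝ) m]
  have hw2 : ‖w‖ ^ 2 ≤ 1 - ε := hw
  have hv2 : ‖v‖ ^ 2 ≤ 1 - ε := hv
  have hw1 : ‖w‖ ≤ 1 := by nlinarith [norm_nonneg w]
  have hv1 : ‖v‖ ≤ 1 := by nlinarith [norm_nonneg v]
  set a := Real.sqrt (1 - ‖w‖ ^ 2) with ha
  set b := Real.sqrt (1 - ‖v‖ ^ 2) with hb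
  have ha2 : a ^ 2 = 1 - ‖w‖ ^ 2 := Real.sq_sqrt (by nlinarith [norm_nonneg w])
  have hb2 : b ^ 2 = 1 - ‖v‖ ^ 2 := Real.sq_sqrt (by nlinarith [norm_nonneg v])
  have haε : Real.sqrt ε ≤ a := by
    rw [ha]; exact Real.sqrt_le_sqrt (by linarith)
  have hbε : Real.sqrt ε ≤ b := by
    rw [hb]; exact Real.sqrt_le_sqrt (by linarith)
  have hsε : 0 < Real.sqrt ε := Real.sqrt_pos.mpr hε0
  have hsε2 : Real.sqrt ε ^ 2 = ε := Real.sq_sqrt hε0.le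
  -- bound |a - b|
  have hnorm : |‖v‖ - ‖w‖| ≤ ‖w - v‖ := by
    rw [abs_sub_comm]
    exact (abs_norm_sub_norm_le w v)
  have hab : |a - b| * (2 * Real.sqrt ε) ≤ 2 * ‖w - v‖ := by
    have h1 : |a - b| * (a + b) = |‖v‖ ^ 2 - ‖w‖ ^ 2| := by
      rw [← abs_of_nonneg (by positivity : (0:ℝ) ≤ a + b), ← abs_mul]
      congr 1
      nlinarith [ha2, hb2]
    have h2 : |‖v‖ ^ 2 - ‖w‖ ^ 2| ≤ 2 * ‖w - v‖ := by
      have : ‖v‖ ^ 2 - ‖w‖ ^ 2 = (‖v‖ - ‖w‖) * (‖v‖ + ‖w‖) := by ring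
      rw [this, abs_mul, abs_of_nonneg (by positivity : (0:ℝ) ≤ ‖v‖ + ‖w‖)]
      calc |‖v‖ - ‖w‖| * (‖v‖ + ‖w‖) ≤ ‖w - v‖ * 2 := by
            apply mul_le_mul hnorm (by linarith) (by positivity) (norm_nonneg _)
        _ = 2 * ‖w - v‖ := by ring
    calc |a - b| * (2 * Real.sqrt ε) ≤ |a - b| * (a + b) := by
          apply mul_le_mul_of_nonneg_left (by linarith) (abs_nonneg _)
      _ ≤ 2 * ‖w - v‖ := h1 ▸ h2
  have habs : |a - b| ≤ ‖w - v‖ / Real.sqrt ε := by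
    rw [le_div_iff₀ hsε]
    nlinarith
  -- assemble
  have hgr : gr w - gr v = cns (a - b) (w - v) := by rw [gr, gr, cns_sub]
  have hsq : ‖gr w - gr v‖ ^ 2 = (a - b) ^ 2 + ‖w - v‖ ^ 2 := by
    rw [hgr, sq_norm_cns]
  have hKε : (1/ε + 1) ≤ ((m:ℝ) + 2) ^ 2 := by
    rw [hε, one_div, inv_inv]
    nlinarith [Nat.cast_nonneg (α := ℝ) m]
  have hfin : ‖gr w - gr v‖ ^ 2 ≤ (((m:ℝ)+2) * ‖w - v‖) ^ 2 := by
    have h3 : (a - b) ^ 2 ≤ ‖w - v‖ ^ 2 / ε := by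
      have h4 : (a - b) ^ 2 ≤ (‖w - v‖ / Real.sqrt ε) ^ 2 := by
        rw [← sq_abs (a - b)]
        exact pow_le_pow_left₀ (abs_nonneg _) habs 2
      rwa [div_pow, hsε2] at h4
    calc ‖gr w - gr v‖ ^ 2 = (a - b) ^ 2 + ‖w - v‖ ^ 2 := hsq
      _ ≤ ‖w - v‖^2/ε + ‖w-v‖^2 := by linarith
      _ = (1/ε + 1) * ‖w - v‖^2 := by ring
      _ ≤ ((m:ℝ)+2)^2 * ‖w-v‖^2 :=
          mul_le_mul_of_nonneg_right hKε (sq_nonneg _)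
      _ = (((m:ℝ)+2) * ‖w - v‖) ^ 2 := by ring
  have : ‖gr w - gr v‖ ≤ ((m:ℝ)+2) * ‖w - v‖ := by
    have h0 : (0:ℝ) ≤ ((m:ℝ)+2) * ‖w - v‖ := by positivity
    nlinarith [norm_nonneg (gr w - gr v)]
  calc ‖gr w - gr v‖ ≤ ((m:ℝ)+2) * ‖w - v‖ := this
    _ = ((m+2 : ℝ≥0) : ℝ) * ‖w - v‖ := by push_cast; ring


lemma sum_sq_eq_one {x : EuclideanSpace ℝ (Fin (m+2))} (hx : ‖x‖ = 1) :
    ∑ i, x i ^ 2 = 1 := by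
  have h := EuclideanSpace.norm_eq x
  rw [hx] at h
  have h2 : Real.sqrt (∑ i, ‖x i‖ ^ 2) ^ 2 = 1 := by rw [← h]; norm_num
  rw [Real.sq_sqrt (by positivity)] at h2
  simpa [Real.norm_eq_abs, sq_abs] using h2

lemma exists_coord {x : EuclideanSpace ℝ (Fin (m+2))} (hx : ‖x‖ = 1) :
    ∃ i : Fin (m+2), ((m:ℝ)+2)⁻¹ ≤ x i ^ 2 := by
  by_contra h
  push_neg at h
  have hsum := Finset.sum_lt_sum_of_nonempty (Finset.univ_nonempty (α := Fin (m+2)))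
    (f := fun i => x i ^ 2) (g := fun _ => ((m:ℝ)+2)⁻¹) (fun i _ => h i)
  rw [sum_sq_eq_one hx, Finset.sum_const, Finset.card_univ, Fintype.card_fin,
    nsmul_eq_mul] at hsum
  have : ((m:ℝ)+2) * ((m:ℝ)+2)⁻¹ = 1 := by
    apply mul_inv_cancel₀; positivity
  rw [show ((m+2 : ℕ):ℝ) = (m:ℝ)+2 by push_cast; ring, this] at hsum
  exact lt_irrefl _ hsum

lemma mem_gr_image {y : EuclideanSpace ℝ (Fin (m+2))} (hy : ‖y‖ = 1) (h0 : 0 ≤ y 0)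
    (hc : ((m:ℝ)+2)⁻¹ ≤ y 0 ^ 2) : y ∈ gr '' D m := by
  refine ⟨tl y, ?_, ?_⟩
  · have h := sq_norm_eq y
    rw [hy] at h
    have : ‖tl y‖ ^ 2 = 1 - y 0 ^ 2 := by nlinarith
    simp only [D, mem_setOf_eq, this]
    linarith
  · have h := sq_norm_eq y
    rw [hy] at h
    have h1 : 1 - ‖tl y‖ ^ 2 = y 0 ^ 2 := by nlinarith
    rw [gr, h1, Real.sqrt_sq h0]
    exact cns_self_tl y

lemma sphere_subset_cover :
    sphere (0 : EuclideanSpace ℝ (Fin (m+2))) 1 ⊆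
      ⋃ i : Fin (m+2), (LinearIsometryEquiv.piLpCongrLeft 2 ℝ ℝ (Equiv.swap 0 i)) ''
        (gr '' D m ∪ -(gr '' D m)) := by
  intro x hx
  rw [mem_sphere_zero_iff_norm] at hx
  obtain ⟨i, hi⟩ := exists_coord hx
  set P := LinearIsometryEquiv.piLpCongrLeft 2 ℝ ℝ (Equiv.swap (0 : Fin (m+2)) i) with hP
  set y := P.symm x with hy
  have hy0 : y 0 = x i := by
    rw [hy, hP, LinearIsometryEquiv.piLpCongrLeft_symm,
      LinearIsometryEquiv.piLpCongrLeft_apply]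
    rw [Equiv.piCongrLeft'_apply]
    simp only [Equiv.symm_symm]
    rw [Equiv.swap_apply_left]
  have hyn : ‖y‖ = 1 := by rw [hy, LinearIsometryEquiv.norm_map, hx]
  have hmem : y ∈ gr '' D m ∪ -(gr '' D m) := by
    rcases le_or_gt 0 (y 0) with h0 | h0
    · exact Or.inl (mem_gr_image hyn h0 (by rw [hy0]; exact hi))
    · refine Or.inr ?_
      rw [Set.mem_neg]
      refine mem_gr_image ?_ ?_ ?_
      · rw [norm_neg, hyn]
      · have : (-y) 0 = -(y 0) := rfl
        rw [this]; linarith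
      · have : (-y) 0 = -(y 0) := rfl
        rw [this, neg_pow, hy0]
        simpa using hi
  refine mem_iUnion.mpr ⟨i, ⟨y, hmem, ?_⟩⟩
  rw [hy, LinearIsometryEquiv.apply_symm_apply]

lemma closedBall_finite :
    μH[((m:ℝ)+1)] (closedBall (0 : EuclideanSpace ℝ (Fin (m+1))) 1) ≠ ⊤ := by
  have hd : (0:ℝ) ≤ (m:ℝ)+1 := by positivity
  have halip := PiLp.antilipschitzWith_ofLp 2 (fun _ : Fin (m+1) => ℝ)
  have h := halip.le_hausdorffMeasure_image hd (closedBall (0 : EuclideanSpace ℝ (Fin (m+1))) 1)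
  have hpi : (μH[((m:ℝ)+1)] : Measure (∀ _ : Fin (m+1), ℝ)) = volume := by
    have := hausdorffMeasure_pi_real (ι := Fin (m+1))
    simpa using this
  rw [hpi] at h
  have hcomp : IsCompact ((WithLp.equiv 2 (∀ _ : Fin (m+1), ℝ)) ''
      closedBall (0 : EuclideanSpace ℝ (Fin (m+1))) 1) :=
    (isCompact_closedBall _ _).image (PiLp.continuous_ofLp 2 _)
  refine ne_top_of_le_ne_top ?_ h
  exact ENNReal.mul_ne_top
    (ENNReal.rpow_ne_top_of_nonneg hd ENNReal.coe_ne_top) hcomp.measure_lt_top.ne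

lemma grD_finite : μH[((m:ℝ)+1)] (gr '' D m) ≠ ⊤ := by
  have hd : (0:ℝ) ≤ (m:ℝ)+1 := by positivity
  have h := gr_lipschitzOn (m := m).hausdorffMeasure_image_le hd
  refine ne_top_of_le_ne_top ?_ h
  apply ENNReal.mul_ne_top (ENNReal.rpow_ne_top_of_nonneg hd ENNReal.coe_ne_top)
  refine ne_top_of_le_ne_top closedBall_finite (measure_mono ?_)
  intro w hw
  have hw2 : ‖w‖ ^ 2 ≤ 1 - ((m:ℝ)+2)⁻¹ := hw
  have : ‖w‖ ≤ 1 := by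
    nlinarith [norm_nonneg w, inv_nonneg.mpr (show (0:ℝ) ≤ (m:ℝ)+2 by positivity)]
  rwa [mem_closedBall, dist_zero_right]

lemma sphere_finite : μH[((m:ℝ)+1)] (sphere (0 : EuclideanSpace ℝ (Fin (m+2))) 1) ≠ ⊤ := by
  have h1 := measure_mono (μ := μH[((m:ℝ)+1)]) (sphere_subset_cover (m := m))
  refine ne_top_of_le_ne_top ?_ (h1.trans (measure_iUnion_le _))
  rw [tsum_fintype]
  apply (ENNReal.sum_lt_top.mpr ?_).ne
  intro i _
  set P := LinearIsometryEquiv.piLpCongrLeft 2 ℝ ℝ (Equiv.swap (0 : Fin (m+2)) i)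
  rw [show (⇑P '' (gr '' D m ∪ -(gr '' D m)))
      = ⇑P.toIsometryEquiv '' (gr '' D m ∪ -(gr '' D m)) from rfl,
    P.toIsometryEquiv.hausdorffMeasure_image]
  refine (measure_union_le _ _).trans_lt ?_
  have hneg : μH[((m:ℝ)+1)] (-(gr '' D m)) = μH[((m:ℝ)+1)] (gr '' D m) := by
    have : -(gr '' D m) = (LinearIsometryEquiv.neg ℝ
        (E := EuclideanSpace ℝ (Fin (m+2)))).toIsometryEquiv '' (gr '' D m) := by
      rw [← Set.image_neg_eq_neg]; rfl
    rw [this, IsometryEquiv.hausdorffMeasure_image]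
  rw [hneg]
  exact ENNReal.add_lt_top.mpr ⟨grD_finite.lt_top, grD_finite.lt_top⟩


lemma f_measurable (u : EuclideanSpace ℝ (Fin (m+2))) :
    Measurable fun v : EuclideanSpace ℝ (Fin (m+2)) =>
      (ENNReal.ofReal ‖u - v‖) ^ (-((m:ℝ)+2)) := by
  apply ENNReal.continuous_rpow_const.measurable.comp
  exact ENNReal.measurable_ofReal.comp ((continuous_const.sub continuous_id).norm.measurable)

lemma rpow_anti {a b : ℝ≥0∞} (hab : a ≤ b) {z : ℝ} (hz : 0 ≤ z) :
    b ^ (-z) ≤ a ^ (-z) := by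
  rw [ENNReal.rpow_neg, ENNReal.rpow_neg]
  exact ENNReal.inv_le_inv.mpr (ENNReal.rpow_le_rpow hab hz)

lemma inner_top {u : EuclideanSpace ℝ (Fin (m+2))} (hu : ‖u‖ = 1) :
    ∫⁻ v, (ENNReal.ofReal ‖u - v‖) ^ (-((m:ℝ)+2))
      ∂((μH[((m:ℝ)+1)] : Measure (EuclideanSpace ℝ (Fin (m+2)))).restrict (sphere 0 1)) = ⊤ := by
  set σ := (μH[((m:ℝ)+1)] : Measure (EuclideanSpace ℝ (Fin (m+2)))).restrict (sphere 0 1)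
  set I := ∫⁻ v, (ENNReal.ofReal ‖u - v‖) ^ (-((m:ℝ)+2)) ∂σ with hI
  set c0 := min (μH[((m:ℝ)+1)] (ball (0 : EuclideanSpace ℝ (Fin (m+1))) 1)) 1 with hc0def
  have hc0 : c0 ≠ 0 := by
    simp only [hc0def, ne_eq, min_eq_iff]
    intro h
    rcases h with ⟨h, -⟩ | ⟨h, -⟩
    · exact c0_ne_zero m h
    · exact one_ne_zero h
  have hc0t : c0 ≠ ⊤ := ne_top_of_le_ne_top ENNReal.one_ne_top (min_le_right _ _)
  set c : ℝ≥0∞ := 2⁻¹ ^ ((m:ℝ)+1) * c0 with hcdef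
  have hc : c ≠ 0 := by
    apply mul_ne_zero _ hc0
    simp [ENNReal.rpow_eq_zero_iff]
  have hct : c ≠ ⊤ := by
    apply ENNReal.mul_ne_top _ hc0t
    exact ENNReal.rpow_ne_top_of_nonneg (by positivity) (by simp)
  have key : ∀ k : ℕ, 1 ≤ k → (k : ℝ≥0∞) * c ≤ I := by
    intro k hk
    set r : ℝ := (k:ℝ)⁻¹ with hrdef
    have hk0 : (0:ℝ) < k := by exact_mod_cast hk.trans_lt' zero_lt_one
    have hr : 0 < r := by positivity
    have hr1 : r ≤ 1 := by
      rw [hrdef, inv_le_one_iff₀]; right; exact_mod_cast hk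
    set R := ENNReal.ofReal r with hRdef
    have hR0 : R ≠ 0 := by simp [hRdef, hr, ENNReal.ofReal_eq_zero, not_le]
    have hRt : R ≠ ⊤ := ENNReal.ofReal_ne_top
    have step1 : R ^ (-((m:ℝ)+2)) * σ (ball u r) ≤ I := by
      have h1 : R ^ (-((m:ℝ)+2)) * σ (ball u r)
          = ∫⁻ _ in ball u r, R ^ (-((m:ℝ)+2)) ∂σ := (setLIntegral_const _ _).symm
      have h2 : (∫⁻ _ in ball u r, R ^ (-((m:ℝ)+2)) ∂σ)
          ≤ ∫⁻ v in ball u r, (ENNReal.ofReal ‖u - v‖) ^ (-((m:ℝ)+2)) ∂σ := by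
        refine setLIntegral_mono (f_measurable u) fun v hv => ?_
        apply rpow_anti _ (by positivity)
        apply ENNReal.ofReal_le_ofReal
        rw [mem_ball, dist_comm, dist_eq_norm] at hv
        exact hv.le
      have h3 : (∫⁻ v in ball u r, (ENNReal.ofReal ‖u - v‖) ^ (-((m:ℝ)+2)) ∂σ) ≤ I :=
        setLIntegral_le_lintegral _ _
      rw [h1]
      exact le_trans h2 h3
    have step2 : ENNReal.ofReal (r/2) ^ ((m:ℝ)+1) * c0 ≤ σ (ball u r) := by
      rw [Measure.restrict_apply measurableSet_ball, inter_comm]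
      refine le_trans ?_ (cap_lower hu hr hr1)
      exact mul_le_mul_right (min_le_left _ _) _
    have e1 : ENNReal.ofReal (r/2) = R * 2⁻¹ := by
      rw [div_eq_mul_inv, ENNReal.ofReal_mul hr.le, hRdef]
      congr 1
      rw [ENNReal.ofReal_inv_of_pos (by norm_num : (0:ℝ) < 2)]
      norm_num
    have e2 : R ^ (-((m:ℝ)+2)) * (R * 2⁻¹) ^ ((m:ℝ)+1) = (k : ℝ≥0∞) * 2⁻¹ ^ ((m:ℝ)+1) := by
      rw [ENNReal.mul_rpow_of_nonneg _ _ (by positivity), ← mul_assoc,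
        ← ENNReal.rpow_add _ _ hR0 hRt]
      have : -((m:ℝ)+2) + ((m:ℝ)+1) = -1 := by ring
      rw [this, ENNReal.rpow_neg_one]
      congr 1
      rw [hRdef, hrdef, ENNReal.ofReal_inv_of_pos hk0, inv_inv, ENNReal.ofReal_natCast]
    calc (k : ℝ≥0∞) * c = R ^ (-((m:ℝ)+2)) * (ENNReal.ofReal (r/2) ^ ((m:ℝ)+1) * c0) := by
          rw [hcdef, e1, ← mul_assoc, ← e2]; ring
      _ ≤ R ^ (-((m:ℝ)+2)) * σ (ball u r) := mul_le_mul_right step2 _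
      _ ≤ I := step1
  by_contra hItop
  have hdiv : I / c ≠ ⊤ := (ENNReal.div_lt_top hItop hc).ne
  obtain ⟨k, hklt⟩ := ENNReal.exists_nat_gt hdiv
  have hk1 : ((max k 1 : ℕ) : ℝ≥0∞) ≤ I / c := by
    rw [ENNReal.le_div_iff_mul_le (Or.inl hc) (Or.inl hct)]
    exact key _ (le_max_right _ _)
  have : (k : ℝ≥0∞) ≤ I / c :=
    le_trans (Nat.cast_le.mpr (le_max_left k 1)) hk1
  exact absurd hklt this.not_gt



end SphereHausdorffAux

open SphereHausdorffAux in
/-- Let `σ` be the `(n-1)`-dimensional Hausdorff measure restricted to the unit sphere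
`S^{n-1} ⊂ ℝⁿ`. The integral of `(u, v) ↦ ‖u - v‖^{-n}` over `S^{n-1} × S^{n-1}` with
respect to `σ × σ` is infinite (with the convention `‖u - v‖^{-n} = ∞` when `u = v`). -/
theorem lintegral_sphere_inv_norm_sub_pow_eq_top (n : ℕ) (hn : 2 ≤ n) :
    (∫⁻ p : EuclideanSpace ℝ (Fin n) × EuclideanSpace ℝ (Fin n),
        (ENNReal.ofReal ‖p.1 - p.2‖) ^ (-(n : ℝ))
      ∂(((μH[(n : ℝ) - 1] : Measure (EuclideanSpace ℝ (Fin n))).restrict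
            (Metric.sphere 0 1)).prod
          ((μH[(n : ℝ) - 1] : Measure (EuclideanSpace ℝ (Fin n))).restrict
            (Metric.sphere 0 1)))) = ⊤ := by
  obtain ⟨m, rfl⟩ := Nat.exists_eq_add_of_le' hn
  have hd : ((m+2 : ℕ) : ℝ) - 1 = (m:ℝ)+1 := by push_cast; ring
  have he : -((m+2 : ℕ) : ℝ) = -((m:ℝ)+2) := by push_cast; ring
  rw [hd, he]
  set σ := (μH[((m:ℝ)+1)] : Measure (EuclideanSpace ℝ (Fin (m+2)))).restrict
    (Metric.sphere 0 1) with hσ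
  haveI : IsFiniteMeasure σ := by
    constructor
    rw [hσ, Measure.restrict_apply_univ]
    exact sphere_finite.lt_top
  have hfm : Measurable fun p : EuclideanSpace ℝ (Fin (m+2)) × EuclideanSpace ℝ (Fin (m+2)) =>
      (ENNReal.ofReal ‖p.1 - p.2‖) ^ (-((m:ℝ)+2)) := by
    apply ENNReal.continuous_rpow_const.measurable.comp
    exact ENNReal.measurable_ofReal.comp ((continuous_fst.sub continuous_snd).norm.measurable)
  rw [MeasureTheory.lintegral_prod _ hfm.aemeasurable]
  have hS : MeasurableSet (Metric.sphere (0 : EuclideanSpace ℝ (Fin (m+2))) 1) :=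
    Metric.isClosed_sphere.measurableSet
  have hpos : μH[((m:ℝ)+1)] (Metric.sphere (0 : EuclideanSpace ℝ (Fin (m+2))) 1) ≠ 0 := by
    intro h0
    have hsub := measure_mono (μ := μH[((m:ℝ)+1)])
      (inter_subset_left (s := Metric.sphere (0 : EuclideanSpace ℝ (Fin (m+2))) 1)
        (t := ball (e₀ m) 1))
    rw [h0, le_zero_iff] at hsub
    have hcl := cap_lower (u := e₀ m) norm_e₀ one_pos le_rfl
    rw [hsub, le_zero_iff, mul_eq_zero] at hcl
    rcases hcl with h | h
    · have : ENNReal.ofReal ((1:ℝ)/2) ≠ 0 := by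
        simp [ENNReal.ofReal_eq_zero]
      exact absurd h (by simp [ENNReal.rpow_eq_zero_iff, this])
    · exact c0_ne_zero m h
  have hcong : (∫⁻ x, ∫⁻ y, (ENNReal.ofReal ‖x - y‖) ^ (-((m:ℝ)+2)) ∂σ ∂σ)
      = ∫⁻ _x in Metric.sphere (0 : EuclideanSpace ℝ (Fin (m+2))) 1, (⊤:ℝ≥0∞)
          ∂(μH[((m:ℝ)+1)] : Measure (EuclideanSpace ℝ (Fin (m+2)))) := by
    rw [hσ]
    refine setLIntegral_congr_fun hS fun x hx => ?_
    rw [mem_sphere_zero_iff_norm] at hx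
    exact inner_top hx
  calc (∫⁻ x, ∫⁻ y, (ENNReal.ofReal ‖(x, y).1 - (x, y).2‖) ^ (-((m:ℝ)+2)) ∂σ ∂σ)
      = ∫⁻ _x in Metric.sphere (0 : EuclideanSpace ℝ (Fin (m+2))) 1, (⊤:ℝ≥0∞)
          ∂(μH[((m:ℝ)+1)] : Measure (EuclideanSpace ℝ (Fin (m+2)))) := hcong
    _ = ⊤ * μH[((m:ℝ)+1)] (Metric.sphere (0 : EuclideanSpace ℝ (Fin (m+2))) 1) :=
        setLIntegral_const _ _
    _ = ⊤ := ENNReal.top_mul hpos
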